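/- arXiv:1708.01890 — 3 statements merged into one kernel-verified Lean document; each statement's English description precedes it below -/
import Mathlib

section
/- Let ĉ > 0 and let the payoffs satisfy u00 = u11, u00 > u10, u11 > u01 and payoff symmetry u01 = u10. Suppose π̲, π̄ ∈ (0,1) with π̲ ≤ π̄ satisfy the indifference condition π̲·u11 + (1−π̲)·u10 = π̄·u01 + (1−π̄)·u00, and let (r^R, r^l) ∈ (0,1)² be the unique pair with l(r^R) = l(π̲) + (u11 − u10)/ĉ and l(r^l) = l(π̄) − (u00 − u01)/ĉ. Then π̲ + π̄ = 1 and r^l + r^R = 1. -/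
/-- `l(r) = 2·log(r/(1−r)) − 1/r + 1/(1−r)`. -/
noncomputable def l (r : ℝ) : ℝ := 2 * Real.log (r / (1 - r)) - 1 / r + 1 / (1 - r)

lemma l_odd (r : ℝ) : l (1 - r) = - l r := by
  unfold l
  have : (1 - r) / (1 - (1 - r)) = (r / (1 - r))⁻¹ := by
    rw [inv_div]; norm_num
  rw [this, Real.log_inv]
  ring

lemma l_hasDerivAt (r : ℝ) (h0 : 0 < r) (h1 : r < 1) :
    HasDerivAt l (2 / r + 2 / (1 - r) + 1 / r ^ 2 + 1 / (1 - r) ^ 2) r := by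
  have hr : r ≠ 0 := ne_of_gt h0
  have hr1 : (1 : ℝ) - r ≠ 0 := by linarith
  have hq : r / (1 - r) ≠ 0 := div_ne_zero hr hr1
  have hinner : HasDerivAt (fun x : ℝ => x / (1 - x)) ((1 * (1 - r) - r * (-1)) / (1 - r) ^ 2) r := by
    exact (hasDerivAt_id r).div ((hasDerivAt_id r).const_sub 1) hr1
  have hlog : HasDerivAt (fun x : ℝ => Real.log (x / (1 - x)))
      (((1 * (1 - r) - r * (-1)) / (1 - r) ^ 2) / (r / (1 - r))) r := hinner.log hq
  have hinv1 : HasDerivAt (fun x : ℝ => 1 / x) (-(r ^ 2)⁻¹) r := by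
    simpa [one_div] using (hasDerivAt_inv hr)
  have hinv2 : HasDerivAt (fun x : ℝ => 1 / (1 - x)) (((1 - r) ^ 2)⁻¹) r := by
    have h := (hasDerivAt_inv hr1).comp r ((hasDerivAt_id r).const_sub 1)
    simpa [one_div, Function.comp_def] using h.neg.neg
  have := ((hlog.const_mul 2).sub hinv1).add hinv2
  convert this using 1
  · rfl
  · rfl
  · rfl
  field_simp
  ring

lemma l_strictMonoOn : StrictMonoOn l (Set.Ioo (0 : ℝ) 1) := by
  apply strictMonoOn_of_deriv_pos (convex_Ioo 0 1)
  · intro x hx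
    exact ((l_hasDerivAt x hx.1 hx.2).continuousAt).continuousWithinAt
  · intro x hx
    rw [interior_Ioo] at hx
    obtain ⟨h0, h1⟩ := hx
    rw [(l_hasDerivAt x h0 h1).deriv]
    have h1' : (0 : ℝ) < 1 - x := by linarith
    positivity

theorem stmt_4 (chat u00 u01 u10 u11 πlo πhi rR rl : ℝ)
    (hc : 0 < chat)
    (huu : u00 = u11) (h00 : u10 < u00) (h11 : u01 < u11)
    (hsym : u01 = u10)
    (hπlo : πlo ∈ Set.Ioo (0 : ℝ) 1) (hπhi : πhi ∈ Set.Ioo (0 : ℝ) 1)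
    (hle : πlo ≤ πhi)
    (hind : πlo * u11 + (1 - πlo) * u10 = πhi * u01 + (1 - πhi) * u00)
    (hrR : rR ∈ Set.Ioo (0 : ℝ) 1) (hrl : rl ∈ Set.Ioo (0 : ℝ) 1)
    (heqR : l rR = l πlo + (u11 - u10) / chat)
    (heql : l rl = l πhi - (u00 - u01) / chat) :
    πlo + πhi = 1 ∧ rl + rR = 1 := by
  have hdu : u10 < u11 := by linarith
  have hsum : πlo + πhi = 1 := by
    have h : (πlo + πhi - 1) * (u11 - u10) = 0 := by
      subst huu hsym; linarith [hind]
    rcases mul_eq_zero.1 h with h' | h'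
    · linarith
    · linarith
  refine ⟨hsum, ?_⟩
  have hπ : πhi = 1 - πlo := by linarith
  have hlhi : l πhi = - l πlo := by rw [hπ, l_odd]
  have hlrl : l rl = l (1 - rR) := by
    rw [l_odd, heqR, heql, hlhi, huu, hsym]
    ring
  have hmem : 1 - rR ∈ Set.Ioo (0 : ℝ) 1 := ⟨by linarith [hrR.2], by linarith [hrR.1]⟩
  have := l_strictMonoOn.injOn hrl hmem hlrl
  linarith
end

section
/- Let 0 < α < 1/2, 0 < ε < 1, σ > 0, and define φ(z) = exp(2αz/σ²), m̲(z) = (1−ε)·φ(z)/((1+ε) + (1−ε)·φ(z)), m̄(z) = (1+ε)·φ(z)/((1−ε) + (1+ε)·φ(z)), and X(z) = max{(1/2 − α) + 2α·m̲(z), (1/2 + α) − 2α·m̄(z), 1/2}. Set z* = (σ²/(2α))·log((1+ε)/(1−ε)). Then for every z ∈ ℝ: X(z) = (1/2 + α) − 2α/(1 + ((1−ε)/(1+ε))·φ(z)) if z > z*; X(z) = (1/2 − α) + 2α/(1 + ((1+ε)/(1−ε))·φ(z)) if z < −z*; and X(z) = 1/2 if −z* ≤ z ≤ z*. -/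
private lemma auxA (a b c p : ℝ) (hd : b + c * p ≠ 0) :
    (1 / 2 - a) + 2 * a * (c * p / (b + c * p)) - 1/2 = a * (c * p - b) / (b + c * p) := by
  field_simp; ring

private lemma auxB (a b c p : ℝ) (hd : b + c * p ≠ 0) :
    (1 / 2 + a) - 2 * a * (c * p / (b + c * p)) - 1/2 = a * (b - c * p) / (b + c * p) := by
  field_simp; ring

theorem stmt_17 (α ε σ : ℝ) (φ mlo mhi X : ℝ → ℝ)
    (hα : 0 < α) (hα' : α < 1 / 2) (hε : 0 < ε) (hε' : ε < 1) (hσ : 0 < σ)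
    (hφ : ∀ z, φ z = Real.exp (2 * α * z / σ ^ 2))
    (hmlo : ∀ z, mlo z = (1 - ε) * φ z / ((1 + ε) + (1 - ε) * φ z))
    (hmhi : ∀ z, mhi z = (1 + ε) * φ z / ((1 - ε) + (1 + ε) * φ z))
    (hX : ∀ z, X z =
      max (max ((1 / 2 - α) + 2 * α * mlo z) ((1 / 2 + α) - 2 * α * mhi z))
        (1 / 2)) :
    let zstar := (σ ^ 2 / (2 * α)) * Real.log ((1 + ε) / (1 - ε))
    ∀ z : ℝ,
      (z > zstar → X z = (1 / 2 + α) - 2 * α / (1 + ((1 - ε) / (1 + ε)) * φ z)) ∧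
      (z < -zstar → X z = (1 / 2 - α) + 2 * α / (1 + ((1 + ε) / (1 - ε)) * φ z)) ∧
      (-zstar ≤ z → z ≤ zstar → X z = 1 / 2) := by
  intro zstar z
  have hε1 : (0:ℝ) < 1 - ε := by linarith
  have hε2 : (0:ℝ) < 1 + ε := by linarith
  have hσ2 : (0:ℝ) < σ ^ 2 := by positivity
  have h2α : (0:ℝ) < 2 * α := by linarith
  have hR : (0:ℝ) < (1 + ε) / (1 - ε) := by positivity
  have hp : 0 < φ z := by rw [hφ]; exact Real.exp_pos _
  have hd1 : 0 < (1 + ε) + (1 - ε) * φ z := by positivity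
  have hd2 : 0 < (1 - ε) + (1 + ε) * φ z := by positivity
  have key : ∀ w : ℝ, (zstar < w ↔ Real.log ((1 + ε) / (1 - ε)) < 2 * α * w / σ ^ 2) := by
    intro w
    show σ ^ 2 / (2 * α) * Real.log ((1 + ε) / (1 - ε)) < w ↔ _
    rw [div_mul_eq_mul_div, div_lt_iff₀ h2α, lt_div_iff₀ hσ2]
    constructor <;> intro h <;> nlinarith [h]
  have hiff : ∀ w : ℝ, (zstar < w ↔ (1 + ε) / (1 - ε) < Real.exp (2 * α * w / σ ^ 2)) := by
    intro w
    rw [← Real.exp_log hR, Real.exp_lt_exp]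
    exact key w
  refine ⟨?_, ?_, ?_⟩
  · -- case z > zstar
    intro hz
    have h1 : (1 + ε) / (1 - ε) < φ z := by rw [hφ]; exact (hiff z).mp hz
    have h1' : 1 + ε < (1 - ε) * φ z := by
      rw [div_lt_iff₀ hε1] at h1; linarith [h1]
    have hA : (1:ℝ)/2 ≤ (1 / 2 - α) + 2 * α * mlo z := by
      rw [hmlo z, ← sub_nonneg]
      have heq := auxA α (1 + ε) (1 - ε) (φ z) hd1.ne'
      rw [heq]
      apply div_nonneg _ hd1.le
      nlinarith
    have hB : (1 / 2 + α) - 2 * α * mhi z ≤ 1/2 := by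
      rw [hmhi z, ← sub_nonpos]
      have heq := auxB α (1 - ε) (1 + ε) (φ z) hd2.ne'
      rw [heq]
      apply div_nonpos_of_nonpos_of_nonneg _ hd2.le
      nlinarith [mul_pos hε hp]
    rw [hX, max_eq_left (le_trans hB hA), max_eq_left hA, hmlo]
    have hd3 : (0:ℝ) < 1 + (1 - ε) / (1 + ε) * φ z := by positivity
    field_simp
    ring
  · -- case z < -zstar
    intro hz
    have hz' : zstar < -z := by simp only [zstar] at hz ⊢; linarith
    have hexp : (1 + ε) / (1 - ε) < Real.exp (2 * α * (-z) / σ ^ 2) := (hiff (-z)).mp hz'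
    have h1 : φ z < (1 - ε) / (1 + ε) := by
      rw [hφ]
      have hinv : Real.exp (2 * α * z / σ ^ 2) = (Real.exp (2 * α * (-z) / σ ^ 2))⁻¹ := by
        rw [← Real.exp_neg]; ring_nf
      rw [hinv]
      rw [inv_lt_comm₀ (Real.exp_pos _) (by positivity)]
      calc ((1 - ε)/(1 + ε))⁻¹ = (1 + ε)/(1 - ε) := by rw [inv_div]
        _ < Real.exp (2 * α * (-z) / σ ^ 2) := hexp
    have h1' : (1 + ε) * φ z < 1 - ε := by
      rw [lt_div_iff₀ hε2] at h1; linarith [h1]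
    have hB : (1:ℝ)/2 ≤ (1 / 2 + α) - 2 * α * mhi z := by
      rw [hmhi z, ← sub_nonneg]
      have heq := auxB α (1 - ε) (1 + ε) (φ z) hd2.ne'
      rw [heq]
      apply div_nonneg _ hd2.le
      nlinarith
    have hA : (1 / 2 - α) + 2 * α * mlo z ≤ 1/2 := by
      rw [hmlo z, ← sub_nonpos]
      have heq := auxA α (1 + ε) (1 - ε) (φ z) hd1.ne'
      rw [heq]
      apply div_nonpos_of_nonpos_of_nonneg _ hd1.le
      nlinarith [mul_pos hε hp]
    rw [hX, max_eq_right (le_trans hA hB), max_eq_left hB, hmhi]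
    have hd3 : (0:ℝ) < 1 + (1 + ε) / (1 - ε) * φ z := by positivity
    field_simp
    ring
  · -- middle case
    intro hz1 hz2
    have h1 : φ z ≤ (1 + ε) / (1 - ε) := by
      rw [hφ]
      by_contra h
      push_neg at h
      have := (hiff z).mpr h
      linarith
    have h2 : (1 - ε) / (1 + ε) ≤ φ z := by
      by_contra h
      push_neg at h
      have hh : (1 + ε) / (1 - ε) < Real.exp (2 * α * (-z) / σ ^ 2) := by
        rw [hφ] at h
        have hinv : Real.exp (2 * α * (-z) / σ ^ 2) = (Real.exp (2 * α * z / σ ^ 2))⁻¹ := by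
          rw [← Real.exp_neg]; ring_nf
        rw [hinv, lt_inv_comm₀ hR (Real.exp_pos _)]
        calc Real.exp (2 * α * z / σ ^ 2) < (1 - ε)/(1 + ε) := h
          _ = ((1 + ε)/(1 - ε))⁻¹ := by rw [inv_div]
      have := (hiff (-z)).mpr hh
      simp only [zstar] at this hz1
      linarith
    have h1' : (1 - ε) * φ z ≤ 1 + ε := by
      have := (le_div_iff₀ hε1).mp h1; linarith [this]
    have h2' : 1 - ε ≤ (1 + ε) * φ z := by
      have := (div_le_iff₀ hε2).mp h2; linarith [this]
    have hA : (1 / 2 - α) + 2 * α * mlo z ≤ 1/2 := by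
      rw [hmlo z, ← sub_nonpos]
      have heq := auxA α (1 + ε) (1 - ε) (φ z) hd1.ne'
      rw [heq]
      apply div_nonpos_of_nonpos_of_nonneg _ hd1.le
      nlinarith
    have hB : (1 / 2 + α) - 2 * α * mhi z ≤ 1/2 := by
      rw [hmhi z, ← sub_nonpos]
      have heq := auxB α (1 - ε) (1 + ε) (φ z) hd2.ne'
      rw [heq]
      apply div_nonpos_of_nonpos_of_nonneg _ hd2.le
      nlinarith
    rw [hX, max_eq_right (max_le hA hB)]
end

section
/- Let b > 0, ĉ > 0 and π̲ ∈ (0, 1/2). Let r̃^R ∈ (0,1) be the unique solution of l(r̃^R) = l(π̲) + b/ĉ, and set r̃^l = 1 − r̃^R; let r̃_B^R ∈ (1/2, 1) be the unique solution of l(r̃_B^R) = b/ĉ, and set r̃_B^l = 1 − r̃_B^R. Then r̃_B^l < r̃^l and r̃^R < r̃_B^R. (This is the comparison, in the payoff-symmetric sequential testing problem with a = b, between the continuation thresholds of the ambiguity-averse decision-maker with lower prior π̲ < 1/2 for H₁ and those of a Bayesian: the robust continuation region is strictly contained in the Bayesian one.) -/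
theorem stmt_19 (b chat πlo rR rBR : ℝ)
    (hb : 0 < b) (hc : 0 < chat)
    (hπlo : πlo ∈ Set.Ioo (0 : ℝ) (1 / 2))
    (hrR : rR ∈ Set.Ioo (0 : ℝ) 1)
    (hrR_eq : l rR = l πlo + b / chat)
    (hrBR : rBR ∈ Set.Ioo (1 / 2 : ℝ) 1)
    (hrBR_eq : l rBR = b / chat) :
    1 - rBR < 1 - rR ∧ rR < rBR := by
  have lmono : ∀ x y : ℝ, 0 < x → x < y → y < 1 → l x < l y := by
    intro x y hx hxy hy1
    have hx1 : x < 1 := hxy.trans hy1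
    have h1x : 0 < 1 - x := by linarith
    have h1y : 0 < 1 - y := by linarith
    have hy : 0 < y := hx.trans hxy
    have hfrac : x / (1 - x) < y / (1 - y) := by
      rw [div_lt_div_iff₀ h1x h1y]; nlinarith
    have hlog : Real.log (x / (1 - x)) < Real.log (y / (1 - y)) :=
      Real.log_lt_log (div_pos hx h1x) hfrac
    have h2 : 1 / y < 1 / x := one_div_lt_one_div_of_lt hx hxy
    have h3 : 1 / (1 - x) < 1 / (1 - y) := one_div_lt_one_div_of_lt h1y (by linarith)
    unfold l; linarith
  have lhalf : l (1 / 2) = 0 := by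
    unfold l; norm_num
  obtain ⟨hπ0, hπ2⟩ := hπlo
  obtain ⟨hrR0, hrR1⟩ := hrR
  obtain ⟨hrBR0, hrBR1⟩ := hrBR
  have hπneg : l πlo < 0 := lhalf ▸ lmono πlo (1 / 2) hπ0 hπ2 (by norm_num)
  have hlt : l rR < l rBR := by rw [hrR_eq, hrBR_eq]; linarith
  have : rR < rBR := by
    by_contra h
    push_neg at h
    rcases eq_or_lt_of_le h with h' | h'
    · rw [h'] at hlt; linarith
    · exact absurd (lmono rBR rR (by linarith) h' hrR1) (by linarith)
  exact ⟨by linarith, this⟩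
end
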